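/- Let n ≥ 2 and fix constants 0 < c' < 1 and M > 0. Then there exists ε > 0 such that for all v, ξ' ∈ ℝ^{n−1} with ‖v‖ ≤ M and ‖ξ'‖² ≤ c', the roots a₊ := (i − g + i·r₀)/(1+m) and a₋ := (i − g − i·r₀)/(1+m), where g := ⟨v,ξ'⟩, m := ‖v‖², s := ‖ξ'‖² and r₀ := ((1+ig)² − (1−s)(1+m))^{1/2} (principal branch), satisfy Im a₊ ≥ ε and Im a₋ ≥ ε. -/

import Mathlib

open Complex

/-- The principal-branch square root `r₀` of the discriminant of the symbol of the
boundary-flattened conjugated Laplacian (at `h = 0`), with `g = ⟨v,ξ'⟩`,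
`m = ‖v‖²`, `s = ‖ξ'‖²`. -/
noncomputable def r0 (g m s : ℝ) : ℂ :=
  ((1 + Complex.I * (g : ℂ)) ^ 2 - (1 - (s : ℂ)) * (1 + (m : ℂ))) ^ ((1 : ℂ) / 2)

/-- The root `a₊ = (i − g + i·r₀)/(1+m)`. -/
noncomputable def aPlus (g m s : ℝ) : ℂ :=
  (Complex.I - (g : ℂ) + Complex.I * r0 g m s) / (1 + (m : ℂ))

/-- The root `a₋ = (i − g − i·r₀)/(1+m)`. -/
noncomputable def aMinus (g m s : ℝ) : ℂ :=
  (Complex.I - (g : ℂ) - Complex.I * r0 g m s) / (1 + (m : ℂ))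

/-- The principal square root has nonnegative real part. -/
lemma re_cpow_half_nonneg (w : ℂ) : 0 ≤ (w ^ ((1:ℂ)/2)).re := by
  rcases eq_or_ne w 0 with rfl | hw
  · simp [Complex.zero_cpow (by norm_num : ((1:ℂ)/2) ≠ 0)]
  · rw [Complex.cpow_def_of_ne_zero hw, Complex.exp_re]
    apply mul_nonneg (Real.exp_pos _).le
    apply Real.cos_nonneg_of_mem_Icc
    have h1 := Complex.arg_le_pi w
    have h2 := Complex.neg_pi_lt_arg w
    have h3 : (Complex.log w * ((1:ℂ)/2)).im = Complex.arg w / 2 := by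
      simp [Complex.mul_im, Complex.log_im]; ring
    rw [h3]
    constructor <;> linarith

/-- The principal square root squares back to the original number. -/
lemma sq_cpow_half (w : ℂ) : (w ^ ((1:ℂ)/2)) ^ 2 = w := by
  simpa [one_div] using Complex.cpow_nat_inv_pow w (two_ne_zero)

/-- Pure real-algebra key step: if `x ≥ 0`, `x² − y² = 1 − g² − P`, `xy = g`,
then `x ≤ 1 − δ/2` for suitable small `δ > 0`. -/
lemma key_bound (x y g P δ : ℝ) (hx0 : 0 ≤ x) (hre : x^2 - y^2 = 1 - g^2 - P)
    (hxy : x * y = g) (hδpos : 0 < δ) (hδP : δ ≤ P/4) (hδ4 : δ ≤ 1/4)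
    (hδg : δ * g^2 ≤ P/4) : x ≤ 1 - δ/2 := by
  have hquart : x^2 * (x^2 - 1 + g^2 + P) = g^2 := by
    have hy2 : x^2 - 1 + g^2 + P = y^2 := by linarith
    rw [hy2, ← mul_pow, hxy]
  have hu : x^2 ≤ 1 - δ := by
    by_contra h
    push_neg at h
    have h1 : 0 < (1-δ)*(P - δ) - δ * g^2 := by nlinarith
    have hφ : 0 < (1-δ)^2 + (1-δ)*(g^2+P-1) - g^2 := by nlinarith
    have hφx : (x^2)^2 + x^2*(g^2+P-1) - g^2 = 0 := by nlinarith [hquart]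
    have hpos2 : 0 < x^2 + (1-δ) + g^2 + P - 1 := by nlinarith [sq_nonneg g]
    have hfac : (x^2 - (1-δ)) * (x^2 + (1-δ) + g^2 + P - 1)
        = ((x^2)^2 + x^2*(g^2+P-1) - g^2) - ((1-δ)^2 + (1-δ)*(g^2+P-1) - g^2) := by ring
    have hmul := mul_pos (by linarith : (0:ℝ) < x^2 - (1-δ)) hpos2
    rw [hfac, hφx] at hmul
    linarith
  by_contra h
  push_neg at h
  nlinarith

/-- Quantitative upper bound on `Re r₀` over the compact parameter region. -/
lemma r0_re_le (g m s c' M : ℝ) (hm0 : 0 ≤ m) (hm : m ≤ M^2) (hs0 : 0 ≤ s) (hs : s ≤ c')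
    (hg : g^2 ≤ M^2 * c') (hc0 : 0 < c') (hc1 : c' < 1) :
    (r0 g m s).re ≤ 1 - (1 - c') / (4 * (1 + M^2 * c')) / 2 := by
  have hMc : 0 ≤ M^2 * c' := by nlinarith [sq_nonneg M]
  have hden : (0:ℝ) < 4 * (1 + M^2 * c') := by nlinarith
  set δ : ℝ := (1 - c') / (4 * (1 + M^2 * c')) with hδdef
  have hδpos : 0 < δ := div_pos (by linarith) hden
  have hδ2 : δ * (4 * (1 + M^2 * c')) = 1 - c' := by
    rw [hδdef]; field_simp
  have hδ4 : δ ≤ (1 - c')/4 := by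
    rw [hδdef, div_le_div_iff₀ hden (by norm_num)]
    nlinarith
  have hsq : (r0 g m s)^2 = (1 + Complex.I * (g : ℂ)) ^ 2 - (1 - (s : ℂ)) * (1 + (m : ℂ)) :=
    sq_cpow_half _
  have hre : (r0 g m s).re^2 - (r0 g m s).im^2 = 1 - g^2 - (1 - s) * (1 + m) := by
    have := congrArg Complex.re hsq
    simpa [pow_two, Complex.mul_re, Complex.mul_im] using this
  have him : (r0 g m s).re * (r0 g m s).im = g := by
    have := congrArg Complex.im hsq
    simp [pow_two, Complex.mul_re, Complex.mul_im] at this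
    linarith [this]
  have hP : 1 - c' ≤ (1 - s) * (1 + m) := by nlinarith
  refine key_bound _ _ g ((1-s)*(1+m)) δ (re_cpow_half_nonneg _) hre him hδpos ?_ ?_ ?_
  · linarith
  · linarith
  · have h1 : δ * g^2 ≤ δ * (M^2 * c') := by nlinarith
    nlinarith [hδ2]

/-- Uniform lower bound on the imaginary parts of the roots `a₊`, `a₋` over the
compact region `‖v‖ ≤ M`, `‖ξ'‖² ≤ c'` with `0 < c' < 1`. -/
theorem roots_uniformly_in_upper_half_plane (n : ℕ) (hn : 2 ≤ n)
    (c' M : ℝ) (hc0 : 0 < c') (hc1 : c' < 1) (hM : 0 < M) :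
    ∃ ε > 0, ∀ v ξ' : EuclideanSpace ℝ (Fin (n - 1)), ‖v‖ ≤ M → ‖ξ'‖ ^ 2 ≤ c' →
      ε ≤ (aPlus (inner ℝ v ξ') (‖v‖ ^ 2) (‖ξ'‖ ^ 2)).im ∧
      ε ≤ (aMinus (inner ℝ v ξ') (‖v‖ ^ 2) (‖ξ'‖ ^ 2)).im := by
  have hMc : 0 ≤ M^2 * c' := by nlinarith [sq_nonneg M]
  have hden : (0:ℝ) < 4 * (1 + M^2 * c') := by nlinarith
  set δ : ℝ := (1 - c') / (4 * (1 + M^2 * c')) with hδdef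
  have hδpos : 0 < δ := div_pos (by linarith) hden
  have hδ4 : δ ≤ (1 - c')/4 := by
    rw [hδdef, div_le_div_iff₀ hden (by norm_num)]
    nlinarith
  have hM2 : (0:ℝ) < 1 + M^2 := by nlinarith [sq_nonneg M]
  refine ⟨δ/2/(1+M^2), div_pos (by linarith) hM2, ?_⟩
  intro v ξ' hv hξ
  set g : ℝ := inner ℝ v ξ' with hgdef
  set m : ℝ := ‖v‖^2 with hmdef
  set s : ℝ := ‖ξ'‖^2 with hsdef
  have hm0 : 0 ≤ m := sq_nonneg _
  have hmM : m ≤ M^2 := by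
    rw [hmdef]; exact pow_le_pow_left₀ (norm_nonneg _) hv 2
  have hs0 : 0 ≤ s := sq_nonneg _
  have hg2 : g^2 ≤ M^2 * c' := by
    have h1 : |g| ≤ ‖v‖ * ‖ξ'‖ := abs_real_inner_le_norm v ξ'
    have h2 : g^2 ≤ (‖v‖ * ‖ξ'‖)^2 := by
      rw [← _root_.sq_abs g]
      exact pow_le_pow_left₀ (abs_nonneg _) h1 2
    have h3 : (‖v‖ * ‖ξ'‖)^2 = m * s := by rw [hmdef, hsdef]; ring
    nlinarith [norm_nonneg v, norm_nonneg ξ', hv, hξ]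
  have hx0 : 0 ≤ (r0 g m s).re := re_cpow_half_nonneg _
  have hxle : (r0 g m s).re ≤ 1 - δ/2 :=
    r0_re_le g m s c' M hm0 hmM hs0 hξ hg2 hc0 hc1
  have hm1 : (0:ℝ) < 1 + m := by linarith
  have hcast : (1 + (m:ℂ)) = ((1+m : ℝ) : ℂ) := by push_cast; ring
  have haim : (aPlus g m s).im = (1 + (r0 g m s).re)/(1+m) := by
    rw [aPlus, hcast, Complex.div_ofReal_im]
    congr 1
    simp [Complex.add_im, Complex.sub_im, Complex.mul_im]
  have hbim : (aMinus g m s).im = (1 - (r0 g m s).re)/(1+m) := by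
    rw [aMinus, hcast, Complex.div_ofReal_im]
    congr 1
    simp [Complex.add_im, Complex.sub_im, Complex.mul_im]
  have hεm : δ/2/(1+M^2) * (1+m) ≤ δ/2 := by
    rw [div_mul_eq_mul_div, div_le_iff₀ hM2]
    have : (0:ℝ) ≤ δ/2 := by linarith
    nlinarith
  constructor
  · rw [haim, le_div_iff₀ hm1]
    have : δ/2 ≤ 1 := by linarith
    linarith
  · rw [hbim, le_div_iff₀ hm1]
    linarith
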